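/- Let F be a finite field with q elements, O = F[[z]], and R = F[[z^2, z^3]] = {f ∈ O : coefficient of z is 0}. For a ∈ F set M_a = (1 + a z)·R ⊆ O. Then the M_a are pairwise distinct R-submodules of O, each with valuation set val_z(M_a) = {0} ∪ {n ∈ ℕ : n ≥ 2}, and every R-submodule M ⊆ O with val_z(M) = {0} ∪ {n ≥ 2} equals M_a for a unique a ∈ F. In particular there are exactly q = q^δ such modules (δ = 1). -/

import Mathlib

set_option maxHeartbeats 1000000
set_option synthInstance.maxHeartbeats 400000

/-- The local ring `R = F[[z²,z³]] = {f ∈ F[[z]] : coefficient of z is 0}` of the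
cusp `x² = y³`, as a subalgebra of `O = F[[z]]`. -/
def Rcusp (F : Type*) [Field F] : Subalgebra F (PowerSeries F) where
  carrier := {f | PowerSeries.coeff (R := F) 1 f = 0}
  add_mem' := by
    intro f g hf hg
    simp only [Set.mem_setOf_eq, map_add] at *
    rw [hf, hg, add_zero]
  mul_mem' := by
    intro f g hf hg
    simp only [Set.mem_setOf_eq] at *
    rw [PowerSeries.coeff_mul, Finset.Nat.sum_antidiagonal_eq_sum_range_succ_mk]
    simp [Finset.sum_range_succ, hf, hg]
  algebraMap_mem' := by
    intro r
    simp [Set.mem_setOf_eq, PowerSeries.algebraMap_apply, PowerSeries.coeff_C]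

/-- The `R`-submodule `M_a = (1 + a z)·R ⊆ O`. -/
noncomputable def Mmod (F : Type*) [Field F] (a : F) :
    Submodule ↥(Rcusp F) (PowerSeries F) :=
  Submodule.span ↥(Rcusp F) {1 + PowerSeries.C (R := F) a * PowerSeries.X}

/-- The valuation set `val_z(M) = {ord_z f : f ∈ M, f ≠ 0}` of a submodule `M ⊆ O`. -/
def valset (F : Type*) [Field F] (M : Submodule ↥(Rcusp F) (PowerSeries F)) : Set ℕ :=
  {n | ∃ f ∈ M, PowerSeries.coeff (R := F) n f ≠ 0 ∧ ∀ m < n, PowerSeries.coeff (R := F) m f = 0}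

section Aux

open PowerSeries

variable {F : Type*} [Field F]

lemma aux_smul_eq (r : ↥(Rcusp F)) (f : PowerSeries F) : r • f = (r : PowerSeries F) * f := rfl

lemma aux_mem_Rcusp {f : PowerSeries F} : f ∈ Rcusp F ↔ PowerSeries.coeff (R := F) 1 f = 0 := Iff.rfl

lemma aux_coeff1_mul (f g : PowerSeries F) :
    PowerSeries.coeff (R := F) 1 (f * g) =
      PowerSeries.coeff (R := F) 0 f * PowerSeries.coeff (R := F) 1 g
        + PowerSeries.coeff (R := F) 1 f * PowerSeries.coeff (R := F) 0 g := by
  rw [coeff_mul, Finset.Nat.sum_antidiagonal_eq_sum_range_succ_mk]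
  simp [Finset.sum_range_succ]

lemma aux_coeff0_mul (f g : PowerSeries F) :
    PowerSeries.coeff (R := F) 0 (f * g) = PowerSeries.coeff (R := F) 0 f * PowerSeries.coeff (R := F) 0 g := by
  simp [coeff_zero_eq_constantCoeff, map_mul]

lemma aux_mem_Mmod {a : F} {f : PowerSeries F} :
    f ∈ Mmod F a ↔ PowerSeries.coeff (R := F) 1 f = a * PowerSeries.coeff (R := F) 0 f := by
  set u : PowerSeries F := 1 + PowerSeries.C (R := F) a * PowerSeries.X with hu_def
  have hu0 : PowerSeries.coeff (R := F) 0 u = 1 := by simp [hu_def]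
  have hu1 : PowerSeries.coeff (R := F) 1 u = a := by simp [hu_def]
  have huc : constantCoeff (R := F) u ≠ 0 := by
    rw [← coeff_zero_eq_constantCoeff_apply, hu0]; exact one_ne_zero
  rw [Mmod, Submodule.mem_span_singleton]
  constructor
  · rintro ⟨r, rfl⟩
    rw [aux_smul_eq, aux_coeff1_mul, aux_coeff0_mul, hu0, hu1, r.2, zero_mul, add_zero,
      mul_one, mul_comm]
  · intro h
    have hmul : u * u⁻¹ = 1 := PowerSeries.mul_inv_cancel u huc
    have hv0 : PowerSeries.coeff (R := F) 0 (u⁻¹) = 1 := by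
      have := aux_coeff0_mul u u⁻¹
      rw [hmul, hu0, one_mul] at this
      simpa using this.symm
    have hv1 : PowerSeries.coeff (R := F) 1 (u⁻¹) = -a := by
      have h2 := aux_coeff1_mul u u⁻¹
      rw [hmul, hu0, hu1, one_mul, hv0, mul_one] at h2
      have h3 : PowerSeries.coeff (R := F) 1 (1 : PowerSeries F) = 0 := by simp
      rw [h3] at h2
      linear_combination -h2
    refine ⟨⟨f * u⁻¹, ?_⟩, ?_⟩
    · show PowerSeries.coeff (R := F) 1 (f * u⁻¹) = 0
      rw [aux_coeff1_mul, hv0, hv1, h]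
      ring
    · show (f * u⁻¹) * u = f
      rw [mul_assoc, PowerSeries.inv_mul_cancel u huc, mul_one]

lemma aux_gen_mem (a : F) :
    (1 + PowerSeries.C (R := F) a * PowerSeries.X) ∈ Mmod F a :=
  Submodule.subset_span rfl

lemma aux_inj : Function.Injective (fun a : F => Mmod F a) := by
  intro a b h
  have h' : Mmod F a = Mmod F b := h
  have h1 : (1 + PowerSeries.C (R := F) a * PowerSeries.X) ∈ Mmod F b := h' ▸ aux_gen_mem a
  have := aux_mem_Mmod.1 h1
  simpa using this

lemma aux_valset (a : F) : valset F (Mmod F a) = {0} ∪ {n : ℕ | 2 ≤ n} := by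
  ext n
  simp only [valset, Set.mem_setOf_eq, Set.mem_union, Set.mem_singleton_iff]
  constructor
  · rintro ⟨f, hfM, hn, hlow⟩
    rcases Nat.lt_or_ge n 2 with h2 | h2
    · interval_cases n
      · exact Or.inl rfl
      · exfalso
        have h0 : PowerSeries.coeff (R := F) 0 f = 0 := hlow 0 one_pos
        have := aux_mem_Mmod.1 hfM
        rw [h0, mul_zero] at this
        exact hn this
    · exact Or.inr h2
  · rintro (rfl | h2)
    · refine ⟨1 + PowerSeries.C (R := F) a * PowerSeries.X, aux_gen_mem a, by simp, by omega⟩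
    · refine ⟨PowerSeries.X ^ n, ?_, by simp [PowerSeries.coeff_X_pow], ?_⟩
      · refine aux_mem_Mmod.2 ?_
        rw [PowerSeries.coeff_X_pow, PowerSeries.coeff_X_pow,
          if_neg (by omega), if_neg (by omega), mul_zero]
      · intro m hm
        rw [PowerSeries.coeff_X_pow, if_neg (by omega)]

lemma aux_unique (M : Submodule ↥(Rcusp F) (PowerSeries F))
    (hval : valset F M = {0} ∪ {n : ℕ | 2 ≤ n}) : ∃! a : F, M = Mmod F a := by
  have h0 : (0 : ℕ) ∈ valset F M := by rw [hval]; exact Or.inl rfl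
  obtain ⟨g, hgM, hg0, -⟩ := h0
  have h1 : (1 : ℕ) ∉ valset F M := by rw [hval]; simp
  set g0 := PowerSeries.coeff (R := F) 0 g with hg0def
  set g1 := PowerSeries.coeff (R := F) 1 g with hg1def
  set a : F := g1 * g0⁻¹ with ha_def
  have ha : g1 = a * g0 := by
    rw [ha_def, mul_assoc, inv_mul_cancel₀ hg0, mul_one]
  -- every element of M has coeff1 = a * coeff0
  have sub1 : ∀ f ∈ M, PowerSeries.coeff (R := F) 1 f = a * PowerSeries.coeff (R := F) 0 f := by
    intro f hf
    set f0 := PowerSeries.coeff (R := F) 0 f with hf0def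
    set f1 := PowerSeries.coeff (R := F) 1 f with hf1def
    have hc : (PowerSeries.C (R := F) g0) ∈ Rcusp F := by simp [aux_mem_Rcusp, PowerSeries.coeff_C]
    have hd : (PowerSeries.C (R := F) f0) ∈ Rcusp F := by simp [aux_mem_Rcusp, PowerSeries.coeff_C]
    have hhM : (⟨PowerSeries.C (R := F) g0, hc⟩ : ↥(Rcusp F)) • f
        - (⟨PowerSeries.C (R := F) f0, hd⟩ : ↥(Rcusp F)) • g ∈ M :=
      sub_mem (M.smul_mem _ hf) (M.smul_mem _ hgM)
    set h : PowerSeries F := PowerSeries.C (R := F) g0 * f - PowerSeries.C (R := F) f0 * g with hh_def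
    have hhM' : h ∈ M := hhM
    have hcoeff0 : PowerSeries.coeff (R := F) 0 h = 0 := by
      rw [hh_def, map_sub, aux_coeff0_mul, aux_coeff0_mul, PowerSeries.coeff_zero_C,
        PowerSeries.coeff_zero_C, ← hf0def, ← hg0def]
      ring
    have hcoeff1 : PowerSeries.coeff (R := F) 1 h = 0 := by
      by_contra hne
      refine h1 ⟨h, hhM', hne, ?_⟩
      intro m hm
      interval_cases m
      exact hcoeff0
    have hC1g : PowerSeries.coeff (R := F) 1 (PowerSeries.C (R := F) g0) = 0 := by
      simp [PowerSeries.coeff_C]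
    have hC1f : PowerSeries.coeff (R := F) 1 (PowerSeries.C (R := F) f0) = 0 := by
      simp [PowerSeries.coeff_C]
    have hlin : g0 * f1 - f0 * g1 = 0 := by
      have h2 := hcoeff1
      rw [hh_def, map_sub, aux_coeff1_mul, aux_coeff1_mul, PowerSeries.coeff_zero_C,
        PowerSeries.coeff_zero_C, hC1g, hC1f, ← hf0def, ← hf1def, ← hg0def, ← hg1def] at h2
      linear_combination h2
    have hg0ne : g0 ≠ 0 := hg0
    show f1 = a * f0
    have heq : g0 * f1 = f0 * g1 := by linear_combination hlin
    calc f1 = g0⁻¹ * (g0 * f1) := by rw [← mul_assoc, inv_mul_cancel₀ hg0ne, one_mul]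
      _ = g0⁻¹ * (f0 * g1) := by rw [heq]
      _ = a * f0 := by rw [ha_def]; ring
  -- every series with coeff0 = coeff1 = 0 lies in M
  have hgc : constantCoeff (R := F) g ≠ 0 := by
    rwa [← coeff_zero_eq_constantCoeff_apply]
  have mem2 : ∀ t : PowerSeries F, PowerSeries.coeff (R := F) 0 t = 0 →
      PowerSeries.coeff (R := F) 1 t = 0 → t ∈ M := by
    intro t ht0 ht1
    obtain ⟨h, rfl⟩ : (PowerSeries.X : PowerSeries F) ^ 2 ∣ t := by
      rw [PowerSeries.X_pow_dvd_iff]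
      intro m hm
      interval_cases m <;> assumption
    set k : PowerSeries F := h * g⁻¹ with hk_def
    have key : PowerSeries.X ^ 2 * h = (PowerSeries.X ^ 2 * k) * g := by
      have hinv : g⁻¹ * g = 1 := PowerSeries.inv_mul_cancel g hgc
      calc PowerSeries.X ^ 2 * h = PowerSeries.X ^ 2 * (h * (g⁻¹ * g)) := by
            rw [hinv, mul_one]
        _ = (PowerSeries.X ^ 2 * k) * g := by rw [hk_def]; ring
    have hrk : (PowerSeries.X ^ 2 * k) ∈ Rcusp F := by
      rw [aux_mem_Rcusp]
      have : (PowerSeries.X : PowerSeries F) ^ 2 ∣ PowerSeries.X ^ 2 * k := dvd_mul_right _ _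
      exact (PowerSeries.X_pow_dvd_iff.1 this) 1 one_lt_two
    rw [key]
    exact M.smul_mem (⟨_, hrk⟩ : ↥(Rcusp F)) hgM
  -- M = Mmod F a
  have hMa : M = Mmod F a := by
    apply le_antisymm
    · intro f hf
      exact aux_mem_Mmod.2 (sub1 f hf)
    · rw [Mmod, Submodule.span_le, Set.singleton_subset_iff]
      set u : PowerSeries F := 1 + PowerSeries.C (R := F) a * PowerSeries.X with hu_def
      set t : PowerSeries F := g - PowerSeries.C (R := F) g0 * u with ht_def
      have hu0 : PowerSeries.coeff (R := F) 0 u = 1 := by simp [hu_def]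
      have hu1 : PowerSeries.coeff (R := F) 1 u = a := by simp [hu_def]
      have hC1g : PowerSeries.coeff (R := F) 1 (PowerSeries.C (R := F) g0) = 0 := by
        simp [PowerSeries.coeff_C]
      have ht0 : PowerSeries.coeff (R := F) 0 t = 0 := by
        rw [ht_def, map_sub, aux_coeff0_mul, PowerSeries.coeff_zero_C, hu0, mul_one,
          ← hg0def, sub_self]
      have ht1 : PowerSeries.coeff (R := F) 1 t = 0 := by
        rw [ht_def, map_sub, aux_coeff1_mul, PowerSeries.coeff_zero_C, hu0, hu1, hC1g,
          ← hg1def, ha]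
        ring
      have htM : t ∈ M := mem2 t ht0 ht1
      have hgu : PowerSeries.C (R := F) g0 * u ∈ M := by
        have : PowerSeries.C (R := F) g0 * u = g - t := by rw [ht_def]; ring
        rw [this]
        exact sub_mem hgM htM
      have hc : (PowerSeries.C (R := F) g0⁻¹) ∈ Rcusp F := by
        simp [aux_mem_Rcusp, PowerSeries.coeff_C]
      have := M.smul_mem (⟨PowerSeries.C (R := F) g0⁻¹, hc⟩ : ↥(Rcusp F)) hgu
      rw [aux_smul_eq] at this
      have heq : (PowerSeries.C (R := F) g0⁻¹ : PowerSeries F) * (PowerSeries.C (R := F) g0 * u) = u := by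
        rw [← mul_assoc, ← map_mul, inv_mul_cancel₀ hg0, map_one, one_mul]
      rwa [heq] at this
  refine ⟨a, hMa, ?_⟩
  intro b hb
  exact aux_inj (hb.symm.trans hMa)

end Aux

/-- For a finite field `F` with `q` elements: the modules `M_a = (1+az)R` are pairwise
distinct, each has valuation set `{0} ∪ {n ≥ 2}`, every `R`-submodule of `O` with this
valuation set is `M_a` for a unique `a ∈ F`, and there are exactly `q = q^δ` (δ = 1)
such modules. -/
theorem stmt16 (F : Type*) [Field F] [Fintype F] (q : ℕ) (hq : Fintype.card F = q) :
    Function.Injective (fun a : F => Mmod F a) ∧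
    (∀ a : F, valset F (Mmod F a) = {0} ∪ {n : ℕ | 2 ≤ n}) ∧
    (∀ M : Submodule ↥(Rcusp F) (PowerSeries F),
      valset F M = {0} ∪ {n : ℕ | 2 ≤ n} → ∃! a : F, M = Mmod F a) ∧
    Nat.card {M : Submodule ↥(Rcusp F) (PowerSeries F) //
      valset F M = {0} ∪ {n : ℕ | 2 ≤ n}} = q := by
  refine ⟨aux_inj, aux_valset, aux_unique, ?_⟩
  have bij : Function.Bijective
      (fun a : F => (⟨Mmod F a, aux_valset a⟩ :
        {M : Submodule ↥(Rcusp F) (PowerSeries F) //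
          valset F M = {0} ∪ {n : ℕ | 2 ≤ n}})) := by
    constructor
    · intro a b h
      exact aux_inj (congrArg Subtype.val h)
    · rintro ⟨M, hM⟩
      obtain ⟨a, ha, -⟩ := aux_unique M hM
      exact ⟨a, Subtype.ext ha.symm⟩
  rw [← hq, ← Nat.card_eq_fintype_card]
  exact (Nat.card_congr (Equiv.ofBijective _ bij)).symm
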